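/- Let p be a prime with p ≥ 5, a ∈ ℚ_p with |a|_p < 1, f(x) = x³ + ax², and x₀ a root of x² + ax - 1 = 0. The closed unit sphere S₁(x₀) = {x : |x - x₀|_p = 1} satisfies f(S₁(x₀)) ⊆ S₁(x₀) if and only if -3 has no square root in ℚ_p. -/

import Mathlib

open Polynomial

lemma int_norm_one (p : ℕ) [Fact p.Prime] (hp : 5 ≤ p) (k : ℤ) (hk1 : 0 < k) (hk : k < 5) :
    ‖(k : ℚ_[p])‖ = 1 := by
  refine le_antisymm (Padic.norm_int_le_one k) ?_
  by_contra h
  push_neg at h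
  have hd := (Padic.norm_intCast_lt_one_iff (p := p) (k := k)).1 h
  have := Int.le_of_dvd hk1 hd
  omega

lemma add_small_norm (p : ℕ) [Fact p.Prime] {x y : ℚ_[p]} (hx : ‖x‖ = 1) (hy : ‖y‖ < 1) :
    ‖x + y‖ = 1 := by
  have hne : ‖x‖ ≠ ‖y‖ := by rw [hx]; exact (ne_of_lt hy).symm
  rw [Padic.add_eq_max_of_ne hne, hx]
  exact max_eq_left hy.le

lemma norm_eq_one_of_sq (p : ℕ) [Fact p.Prime] {z : ℚ_[p]} (h : ‖z ^ 2‖ = 1) : ‖z‖ = 1 := by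
  rw [pow_two, norm_mul] at h
  nlinarith [norm_nonneg z]

lemma hensel_sqrt (p : ℕ) [Fact p.Prime] (hp : 5 ≤ p) (u : ℚ_[p]) (hu : ‖u - 1‖ < 1) :
    ∃ w : ℚ_[p], w ^ 2 = u := by
  have hu1 : ‖u‖ ≤ 1 := by
    have h := Padic.nonarchimedean (u - 1) 1
    simpa using h.trans (max_le hu.le (by norm_num))
  set U : ℤ_[p] := ⟨u, hu1⟩ with hU
  have h2c : ((2 : ℤ_[p]) : ℚ_[p]) = ((2 : ℤ) : ℚ_[p]) := by norm_cast
  have h2 : ‖(2 : ℤ_[p])‖ = 1 := by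
    rw [← PadicInt.padic_norm_e_of_padicInt, h2c]
    exact int_norm_one p hp 2 (by norm_num) (by norm_num)
  set F : Polynomial ℤ_[p] := X ^ 2 - C U with hF
  have heval : F.eval 1 = 1 - U := by simp [hF]
  have hderiv : F.derivative = C 2 * X := by
    rw [hF, derivative_sub, derivative_C, derivative_X_pow]
    simp
  have hde : F.derivative.eval 1 = 2 := by simp [hderiv]
  have hnorm : ‖F.eval 1‖ < ‖F.derivative.eval 1‖ ^ 2 := by
    rw [heval, hde, h2]
    have h1 : ‖(1 - U : ℤ_[p])‖ = ‖u - 1‖ := by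
      rw [← PadicInt.padic_norm_e_of_padicInt]
      have : ((1 - U : ℤ_[p]) : ℚ_[p]) = -(u - 1) := by
        show (1 : ℚ_[p]) - u = -(u - 1); ring
      rw [this, norm_neg]
    rw [h1]; simpa using hu
  obtain ⟨z, hz, -⟩ := hensels_lemma hnorm
  refine ⟨(z : ℚ_[p]), ?_⟩
  have hzU : z ^ 2 = U := by
    have h0 : z ^ 2 - U = 0 := by simpa [hF] using hz
    exact sub_eq_zero.mp h0
  have := congrArg (Subtype.val) hzU
  push_cast at this
  simpa [hU] using this

theorem sphere_invariance_iff (p : ℕ) [Fact p.Prime] (hp : 5 ≤ p) (a x₀ : ℚ_[p])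
    (ha : ‖a‖ < 1) (hx : x₀ ^ 2 + a * x₀ - 1 = 0)
    (f : ℚ_[p] → ℚ_[p]) (hf : ∀ x, f x = x ^ 3 + a * x ^ 2) :
    (∀ x : ℚ_[p], ‖x - x₀‖ = 1 → ‖f x - x₀‖ = 1) ↔
      ¬∃ z : ℚ_[p], z ^ 2 = -3 := by
  have h3 : ‖(3 : ℚ_[p])‖ = 1 := by
    have := int_norm_one p hp 3 (by norm_num) (by norm_num); push_cast at this; exact this
  have h2 : ‖(2 : ℚ_[p])‖ = 1 := by
    have := int_norm_one p hp 2 (by norm_num) (by norm_num); push_cast at this; exact this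
  have h4 : ‖(4 : ℚ_[p])‖ = 1 := by
    have := int_norm_one p hp 4 (by norm_num) (by norm_num); push_cast at this; exact this
  have h2ne : (2 : ℚ_[p]) ≠ 0 := by intro h; rw [h] at h2; simp at h2
  -- norm of x₀ is 1
  have hx0 : ‖x₀‖ = 1 := by
    rcases lt_trichotomy ‖x₀‖ 1 with h | h | h
    · exfalso
      have hone : (1 : ℚ_[p]) = x₀ ^ 2 + a * x₀ := by linear_combination -hx
      have : ‖x₀ ^ 2 + a * x₀‖ < 1 := by
        refine lt_of_le_of_lt (Padic.nonarchimedean _ _) (max_lt ?_ ?_)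
        · rw [pow_two, norm_mul]; nlinarith [norm_nonneg x₀]
        · rw [norm_mul]; nlinarith [norm_nonneg x₀, norm_nonneg a]
      rw [← hone] at this; simp at this
    · exact h
    · exfalso
      have hsq : x₀ ^ 2 = 1 - a * x₀ := by linear_combination hx
      have h1 : ‖x₀ ^ 2‖ = ‖x₀‖ ^ 2 := by rw [pow_two, pow_two, norm_mul]
      have h2' : ‖x₀ ^ 2‖ < ‖x₀‖ ^ 2 := by
        rw [hsq, sub_eq_add_neg]
        refine lt_of_le_of_lt (Padic.nonarchimedean _ _) (max_lt ?_ ?_)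
        · simpa using (by nlinarith : (1:ℝ) < ‖x₀‖ ^ 2)
        · rw [norm_neg, norm_mul]; nlinarith [norm_nonneg a, norm_nonneg x₀]
      exact absurd h1 (ne_of_lt h2')
  set b : ℚ_[p] := 3 * x₀ + a with hb_def
  set c : ℚ_[p] := 3 - a * x₀ with hc_def
  have key : ∀ x : ℚ_[p], f x - x₀ = (x - x₀) * ((x - x₀) ^ 2 + b * (x - x₀) + c) := by
    intro x
    rw [hf x, hb_def, hc_def]
    linear_combination (3 * x - 2 * x₀) * hx
  have hsmall : ‖a * x₀ + a ^ 2‖ < 1 := by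
    refine lt_of_le_of_lt (Padic.nonarchimedean _ _) (max_lt ?_ ?_)
    · rw [norm_mul, hx0]; simpa using ha
    · rw [pow_two, norm_mul]; nlinarith [norm_nonneg a]
  have hc : ‖c‖ = 1 := by
    rw [hc_def, sub_eq_add_neg]
    exact add_small_norm p h3 (by rw [norm_neg, norm_mul, hx0]; simpa using ha)
  have hb : ‖b‖ ≤ 1 := by
    refine le_trans (Padic.nonarchimedean _ _) (max_le ?_ ha.le)
    rw [norm_mul, h3, hx0]; norm_num
  have hD : b ^ 2 - 4 * c = -3 + (a * x₀ + a ^ 2) := by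
    rw [hb_def, hc_def]; linear_combination 9 * hx
  have hDn : ‖b ^ 2 - 4 * c‖ = 1 := by
    rw [hD]
    exact add_small_norm p (by rw [norm_neg, h3]) hsmall
  constructor
  · rintro hinv ⟨z, hz⟩
    have hzn : ‖z‖ = 1 := norm_eq_one_of_sq p (by rw [hz, norm_neg, h3])
    have hz0 : z ≠ 0 := by intro h; rw [h] at hzn; simp at hzn
    obtain ⟨w, hw⟩ := hensel_sqrt p hp ((b ^ 2 - 4 * c) / z ^ 2) (by
      have hnum : (b ^ 2 - 4 * c) / z ^ 2 - 1 = (a * x₀ + a ^ 2) / z ^ 2 := by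
        field_simp
        linear_combination hD - hz
      rw [hnum, norm_div, hz, norm_neg, h3]
      simpa using hsmall)
    set s : ℚ_[p] := z * w with hs_def
    have hs2 : s ^ 2 = b ^ 2 - 4 * c := by
      rw [hs_def, mul_pow, hw]
      field_simp
    have hsn : ‖s‖ = 1 := norm_eq_one_of_sq p (by rw [hs2, hDn])
    set γ : ℚ_[p] := (s - b) / 2 with hγ_def
    set γ' : ℚ_[p] := (-s - b) / 2 with hγ'_def
    have hroot : γ ^ 2 + b * γ + c = 0 := by
      rw [hγ_def]; linear_combination hs2 / 4
    have hprod : γ * γ' = c := by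
      rw [hγ_def, hγ'_def]; field_simp; linear_combination -hs2
    have hγle : ‖γ‖ ≤ 1 := by
      rw [hγ_def, norm_div, h2, div_one, sub_eq_add_neg]
      refine le_trans (Padic.nonarchimedean _ _) (max_le (by rw [hsn]) ?_)
      rw [norm_neg]; exact hb
    have hγ'le : ‖γ'‖ ≤ 1 := by
      rw [hγ'_def, norm_div, h2, div_one, sub_eq_add_neg]
      refine le_trans (Padic.nonarchimedean _ _) (max_le (by rw [norm_neg, hsn]) ?_)
      rw [norm_neg]; exact hb
    have hγn : ‖γ‖ = 1 := by
      have := congrArg norm hprod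
      rw [norm_mul, hc] at this
      nlinarith [norm_nonneg γ, norm_nonneg γ']
    have h1 := hinv (x₀ + γ) (by simpa using hγn)
    rw [key (x₀ + γ)] at h1
    simp only [add_sub_cancel_left] at h1
    rw [hroot, mul_zero] at h1
    simp at h1
  · intro hns x hxn
    rw [key x, norm_mul, hxn, one_mul]
    set γ : ℚ_[p] := x - x₀ with hγ_def
    set g : ℚ_[p] := γ ^ 2 + b * γ + c with hg_def
    have hgle : ‖g‖ ≤ 1 := by
      rw [hg_def]
      refine le_trans (Padic.nonarchimedean _ _) (max_le (le_trans (Padic.nonarchimedean _ _) (max_le ?_ ?_)) (le_of_eq hc))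
      · rw [pow_two, norm_mul, hxn]; norm_num
      · rw [norm_mul, hxn, mul_one]; exact hb
    by_contra hne
    have hglt : ‖g‖ < 1 := lt_of_le_of_ne hgle hne
    set t : ℚ_[p] := 2 * γ + b with ht_def
    have ht2 : t ^ 2 = 4 * g + (b ^ 2 - 4 * c) := by
      rw [ht_def, hg_def]; ring
    have hrem : ‖4 * g + (a * x₀ + a ^ 2)‖ < 1 := by
      refine lt_of_le_of_lt (Padic.nonarchimedean _ _) (max_lt ?_ hsmall)
      rw [norm_mul, h4, one_mul]; exact hglt
    have ht2n : ‖t ^ 2‖ = 1 := by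
      have : t ^ 2 = -3 + (4 * g + (a * x₀ + a ^ 2)) := by rw [ht2, hD]; ring
      rw [this]
      exact add_small_norm p (by rw [norm_neg, h3]) hrem
    have htn : ‖t‖ = 1 := norm_eq_one_of_sq p ht2n
    have ht0 : t ≠ 0 := by intro h; rw [h] at htn; simp at htn
    obtain ⟨w, hw⟩ := hensel_sqrt p hp (-3 / t ^ 2) (by
      have hnum : (-3 : ℚ_[p]) / t ^ 2 - 1 = -(4 * g + (a * x₀ + a ^ 2)) / t ^ 2 := by
        field_simp
        linear_combination -ht2 - hD
      rw [hnum, norm_div, norm_neg, ht2n]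
      simpa using hrem)
    refine hns ⟨t * w, ?_⟩
    rw [mul_pow, hw]
    field_simp
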